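/- There are exactly two 2-sorted 5-ary symmetric idempotent Boolean operations (h₁, h₂) satisfying h₁ ⊴ h₁, h₁ ⊴ h₂, h₂ = h₂^d, and the identity h_i(x,x,x,x,y) = h_i(x,x,y,y,y) for both i: namely the operation t with (t₁-values, t₂-values) on (10000,11000,11100,11110) equal to ((0,0,0,0),(0,1,0,1)), and the operation t' with values ((0,0,0,0),(1,0,1,0)). -/

import Mathlib

/-- An `n`-ary Boolean operation. -/
def BOp (n : ℕ) : Type := (Fin n → Bool) → Bool

/-- `Tri f g` means `f ⊴ g`: `f a ≤ g b` whenever `a ≤ b` componentwise. -/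
def Tri {n : ℕ} (f g : BOp n) : Prop :=
  ∀ a b : Fin n → Bool, (∀ i, a i ≤ b i) → f a ≤ g b

/-- `f` is monotone with respect to the componentwise order. -/
def Mono {n : ℕ} (f : BOp n) : Prop :=
  ∀ a b : Fin n → Bool, (∀ i, a i ≤ b i) → f a ≤ f b

/-- The dual of a Boolean operation: `f^d a = ¬ f ā`. -/
def Dual {n : ℕ} (f : BOp n) : BOp n := fun a => !(f (fun i => !(a i)))

/-- Idempotency: `h(a,…,a) = a`. -/
def Idem {n : ℕ} (f : BOp n) : Prop := ∀ b : Bool, f (fun _ => b) = b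

/-- Symmetry: invariance under all permutations of the arguments. -/
def Symm {n : ℕ} (h : BOp n) : Prop :=
  ∀ (σ : Equiv.Perm (Fin n)) (a : Fin n → Bool), h (a ∘ σ) = h a

/-- The tuple with `k` ones followed by zeros. -/
def ones {n : ℕ} (k : ℕ) : Fin n → Bool := fun i => decide (i.val < k)

/-- The symmetric operation determined by a function of the number of  arguments. -/
def mkSym {n : ℕ} (v : ℕ → Bool) : BOp n :=
  fun a => v ((Finset.univ.filter (fun i => a i = true)).card)

-- auxiliary lemmas

lemma card_ones {n k : ℕ} (hk : k ≤ n) :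
    (Finset.univ.filter (fun i => ones (n:=n) k i = true)).card = k := by
  have : (Finset.univ.filter (fun i : Fin n => ones (n:=n) k i = true)) =
      (Finset.range k).attachFin
        (fun m hm => lt_of_lt_of_le (Finset.mem_range.mp hm) hk) := by
    ext i; simp [ones, Finset.mem_attachFin]
  rw [this, Finset.card_attachFin, Finset.card_range]

lemma card_le_n {n : ℕ} (a : Fin n → Bool) :
    (Finset.univ.filter (fun i => a i = true)).card ≤ n := by
  refine le_trans (Finset.card_filter_le _ _) (by simp)

lemma exists_perm_of_card_eq {n : ℕ} {s t : Finset (Fin n)} (h : s.card = t.card) :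
    ∃ σ : Equiv.Perm (Fin n), ∀ i, (σ i ∈ t ↔ i ∈ s) := by
  classical
  have hc : (sᶜ).card = (tᶜ).card := by rw [Finset.card_compl, Finset.card_compl, h]
  let e : ↥s ≃ ↥t := Fintype.equivOfCardEq (by simp [h])
  let e' : {x // x ∉ s} ≃ {x // x ∉ t} := by
    refine Fintype.equivOfCardEq ?_
    have h1 : Fintype.card {x // x ∉ s} = Fintype.card ↥(sᶜ) := by
      refine Fintype.card_congr (Equiv.subtypeEquivRight ?_)
      intro x; simp
    have h2 : Fintype.card {x // x ∉ t} = Fintype.card ↥(tᶜ) := by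
      refine Fintype.card_congr (Equiv.subtypeEquivRight ?_)
      intro x; simp
    rw [h1, h2]; simp only [Fintype.card_coe]; exact hc
  refine ⟨(Equiv.sumCompl (· ∈ s)).symm.trans
    ((e.sumCongr e').trans (Equiv.sumCompl (· ∈ t))), ?_⟩
  intro i
  by_cases hi : i ∈ s
  · have : (Equiv.sumCompl (· ∈ s)).symm i = Sum.inl ⟨i, hi⟩ :=
      Equiv.sumCompl_symm_apply_of_pos hi
    simp only [Equiv.trans_apply, this, Equiv.sumCongr_apply, Sum.map_inl,
      Equiv.sumCompl_apply_inl]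
    exact ⟨fun _ => hi, fun _ => (e ⟨i, hi⟩).2⟩
  · have : (Equiv.sumCompl (· ∈ s)).symm i = Sum.inr ⟨i, hi⟩ :=
      Equiv.sumCompl_symm_apply_of_neg hi
    simp only [Equiv.trans_apply, this, Equiv.sumCongr_apply, Sum.map_inr,
      Equiv.sumCompl_apply_inr]
    exact ⟨fun hmem => absurd hmem (e' ⟨i, hi⟩).2, fun hmem => absurd hmem hi⟩

lemma symm_eval {n : ℕ} {h : BOp n} (hs : Symm h) (a : Fin n → Bool) :
    h a = h (ones ((Finset.univ.filter (fun i => a i = true)).card)) := by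
  classical
  set s := Finset.univ.filter (fun i => a i = true) with hs_def
  obtain ⟨σ, hσ⟩ := exists_perm_of_card_eq
    (s := Finset.univ.filter (fun i => ones (n:=n) s.card i = true)) (t := s)
    (by rw [card_ones (card_le_n a)])
  have key : a ∘ σ = ones (n:=n) s.card := by
    funext i
    show a (σ i) = ones (n:=n) s.card i
    have h1 : a (σ i) = true ↔ ones (n:=n) s.card i = true := by
      constructor
      · intro hx
        have : σ i ∈ s := by simp [hs_def, hx]
        have := (hσ i).mp this
        simpa using this
      · intro hx
        have : i ∈ Finset.univ.filter (fun i => ones (n:=n) s.card i = true) := by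
          simp [hx]
        have := (hσ i).mpr this
        simp [hs_def] at this
        exact this
    cases hx : a (σ i) <;> cases hy : ones (n:=n) s.card i <;> simp_all
  rw [← hs σ a, key]

lemma symm_is_mkSym {n : ℕ} {h : BOp n} (hs : Symm h) :
    h = mkSym (n:=n) (fun k => h (ones k)) := by
  funext a; exact symm_eval hs a

lemma eval_at {n : ℕ} {h : BOp n} (hs : Symm h) (a : Fin n → Bool) (k : ℕ)
    (hk : (Finset.univ.filter (fun i => a i = true)).card = k) : h a = h (ones k) := by
  rw [symm_eval hs a, hk]

lemma mkSym_ext {n : ℕ} {v w : ℕ → Bool} (H : ∀ k ≤ n, v k = w k) :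
    mkSym (n:=n) v = mkSym w := by
  funext a; exact H _ (card_le_n a)

lemma idem_mkSym {n : ℕ} {v : ℕ → Bool} (h0 : v 0 = false) (hn : v n = true) :
    Idem (mkSym (n:=n) v) := by
  intro b
  show v ((Finset.univ.filter fun _ : Fin n => b = true).card) = b
  cases b
  · simp [h0]
  · simp [hn]

lemma symm_mkSym {n : ℕ} (v : ℕ → Bool) : Symm (mkSym (n:=n) v) := by
  intro σ a
  show v _ = v _
  congr 1
  apply Finset.card_bij' (fun i _ => σ i) (fun j _ => σ.symm j) <;> simp

lemma tri_mkSym {n : ℕ} {v w : ℕ → Bool} (H : ∀ l ≤ n, ∀ k ≤ l, v k ≤ w l) :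
    Tri (mkSym (n:=n) v) (mkSym w) := by
  intro a b hab
  show v _ ≤ w _
  refine H _ (card_le_n b) _ ?_
  refine Finset.card_le_card ?_
  intro i hi
  simp only [Finset.mem_filter, Finset.mem_univ, true_and] at *
  exact Bool.le_iff_imp.mp (hab i) hi

lemma compl_card {n : ℕ} (a : Fin n → Bool) :
    (Finset.univ.filter (fun i => (!a i) = true)).card
      = n - (Finset.univ.filter (fun i => a i = true)).card := by
  rw [show (Finset.univ.filter (fun i => (!a i) = true))
      = (Finset.univ.filter (fun i => a i = true))ᶜ by ext i; simp]
  rw [Finset.card_compl, Fintype.card_fin]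

lemma dual_mkSym {n : ℕ} {w : ℕ → Bool} (H : ∀ k ≤ n, w k = !(w (n - k))) :
    mkSym (n:=n) w = Dual (mkSym w) := by
  funext a
  show w _ = !(w _)
  rw [compl_card]
  exact H _ (card_le_n a)

theorem two_sorted_symm5_classification (h₁ h₂ : BOp 5) :
    (Symm h₁ ∧ Symm h₂ ∧ Idem h₁ ∧ Idem h₂ ∧
     Tri h₁ h₁ ∧ Tri h₁ h₂ ∧ h₂ = Dual h₂ ∧
     (∀ x y : Bool,
       h₁ (fun i => if i.val < 4 then x else y) = h₁ (fun i => if i.val < 2 then x else y)) ∧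
     (∀ x y : Bool,
       h₂ (fun i => if i.val < 4 then x else y) = h₂ (fun i => if i.val < 2 then x else y)))
    ↔
    ((h₁ = mkSym (fun c => decide (c = 5)) ∧
      h₂ = mkSym (fun c => decide (c = 2 ∨ c = 4 ∨ c = 5))) ∨
     (h₁ = mkSym (fun c => decide (c = 5)) ∧
      h₂ = mkSym (fun c => decide (c = 1 ∨ c = 3 ∨ c = 5)))) := by
  constructor
  · rintro ⟨s1, s2, i1, i2, t11, t12, d2, id1, id2⟩
    -- values of h₁ and h₂ on ones k
    have hb0 : h₁ (ones (n:=5) 0) = false := by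
      rw [← eval_at s1 (fun _ => false) 0 (by decide)]; exact i1 false
    have hb5 : h₁ (ones (n:=5) 5) = true := by
      rw [← eval_at s1 (fun _ => true) 5 (by decide)]; exact i1 true
    have hc0 : h₂ (ones (n:=5) 0) = false := by
      rw [← eval_at s2 (fun _ => false) 0 (by decide)]; exact i2 false
    have hc5 : h₂ (ones (n:=5) 5) = true := by
      rw [← eval_at s2 (fun _ => true) 5 (by decide)]; exact i2 true
    have hb12 : h₁ (ones (n:=5) 1) ≤ h₁ (ones (n:=5) 2) := t11 _ _ (by decide)
    have hb23 : h₁ (ones (n:=5) 2) ≤ h₁ (ones (n:=5) 3) := t11 _ _ (by decide)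
    have hb34 : h₁ (ones (n:=5) 3) ≤ h₁ (ones (n:=5) 4) := t11 _ _ (by decide)
    have hb42 : h₁ (ones (n:=5) 4) = h₁ (ones (n:=5) 2) := by
      have := id1 true false
      rwa [eval_at s1 (fun i : Fin 5 => if i.val < 4 then true else false) 4 (by decide),
        eval_at s1 (fun i : Fin 5 => if i.val < 2 then true else false) 2 (by decide)] at this
    have hb13 : h₁ (ones (n:=5) 1) = h₁ (ones (n:=5) 3) := by
      have := id1 false true
      rwa [eval_at s1 (fun i : Fin 5 => if i.val < 4 then false else true) 1 (by decide),
        eval_at s1 (fun i : Fin 5 => if i.val < 2 then false else true) 3 (by decide)] at this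
    have hc42 : h₂ (ones (n:=5) 4) = h₂ (ones (n:=5) 2) := by
      have := id2 true false
      rwa [eval_at s2 (fun i : Fin 5 => if i.val < 4 then true else false) 4 (by decide),
        eval_at s2 (fun i : Fin 5 => if i.val < 2 then true else false) 2 (by decide)] at this
    have hc13 : h₂ (ones (n:=5) 1) = h₂ (ones (n:=5) 3) := by
      have := id2 false true
      rwa [eval_at s2 (fun i : Fin 5 => if i.val < 4 then false else true) 1 (by decide),
        eval_at s2 (fun i : Fin 5 => if i.val < 2 then false else true) 3 (by decide)] at this
    have hc14 : h₂ (ones (n:=5) 1) = !(h₂ (ones (n:=5) 4)) := by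
      have := congrFun d2 (ones (n:=5) 1)
      simp only [Dual] at this
      rwa [eval_at s2 (fun i => !(ones (n:=5) 1 i)) 4 (by decide)] at this
    have hc23 : h₂ (ones (n:=5) 2) = !(h₂ (ones (n:=5) 3)) := by
      have := congrFun d2 (ones (n:=5) 2)
      simp only [Dual] at this
      rwa [eval_at s2 (fun i => !(ones (n:=5) 2 i)) 3 (by decide)] at this
    have hbc1 : h₁ (ones (n:=5) 1) ≤ h₂ (ones (n:=5) 1) := t12 _ _ (by decide)
    have hbc2 : h₁ (ones (n:=5) 2) ≤ h₂ (ones (n:=5) 2) := t12 _ _ (by decide)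
    -- all middle values of h₁ are equal, hence false
    have hbeq : h₁ (ones (n:=5) 1) = h₁ (ones (n:=5) 2)
        ∧ h₁ (ones (n:=5) 2) = h₁ (ones (n:=5) 3)
        ∧ h₁ (ones (n:=5) 3) = h₁ (ones (n:=5) 4) := by
      revert hb12 hb23 hb34 hb42 hb13
      cases h₁ (ones (n:=5) 1) <;> cases h₁ (ones (n:=5) 2) <;>
        cases h₁ (ones (n:=5) 3) <;> cases h₁ (ones (n:=5) 4) <;> decide
    obtain ⟨e12, e23, e34⟩ := hbeq
    have hbf : h₁ (ones (n:=5) 1) = false := by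
      by_contra hb
      have hb1 : h₁ (ones (n:=5) 1) = true := by
        cases h : h₁ (ones (n:=5) 1)
        · exact absurd h hb
        · rfl
      have hc1t : h₂ (ones (n:=5) 1) = true := by
        have := hbc1; rw [hb1] at this
        exact Bool.le_iff_imp.mp this rfl
      have hc2t : h₂ (ones (n:=5) 2) = true := by
        have := hbc2; rw [← e12, hb1] at this
        exact Bool.le_iff_imp.mp this rfl
      rw [hc13] at hc1t
      rw [hc2t] at hc23
      simp [hc1t] at hc23
    have f2 : h₁ (ones (n:=5) 2) = false := by rw [← e12]; exact hbf
    have f3 : h₁ (ones (n:=5) 3) = false := by rw [← e23]; exact f2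
    have f4 : h₁ (ones (n:=5) 4) = false := by rw [← e34]; exact f3
    have hb1 : h₁ = mkSym (fun c => decide (c = 5)) := by
      rw [symm_is_mkSym s1]
      apply mkSym_ext
      intro k hk
      interval_cases k <;> simp [hb0, hbf, f2, f3, f4, hb5]
    cases hc2 : h₂ (ones (n:=5) 2)
    · right
      refine ⟨hb1, ?_⟩
      rw [symm_is_mkSym s2]
      apply mkSym_ext
      intro k hk
      have h3 : h₂ (ones (n:=5) 3) = true := by
        rw [hc2] at hc23; simpa using hc23.symm
      have h1 : h₂ (ones (n:=5) 1) = true := by rw [hc13, h3]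
      have h4 : h₂ (ones (n:=5) 4) = false := by rw [hc42, hc2]
      interval_cases k <;> simp [hc0, h1, hc2, h3, h4, hc5]
    · left
      refine ⟨hb1, ?_⟩
      rw [symm_is_mkSym s2]
      apply mkSym_ext
      intro k hk
      have h3 : h₂ (ones (n:=5) 3) = false := by
        rw [hc2] at hc23; simpa using hc23.symm
      have h1 : h₂ (ones (n:=5) 1) = false := by rw [hc13, h3]
      have h4 : h₂ (ones (n:=5) 4) = true := by rw [hc42, hc2]
      interval_cases k <;> simp [hc0, h1, hc2, h3, h4, hc5]
  · rintro (⟨e1, e2⟩ | ⟨e1, e2⟩) <;> subst e1 <;> subst e2 <;>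
      exact ⟨symm_mkSym _, symm_mkSym _, idem_mkSym (by decide) (by decide),
        idem_mkSym (by decide) (by decide),
        tri_mkSym (by decide), tri_mkSym (by decide), dual_mkSym (by decide),
        by decide, by decide⟩
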